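/- arXiv:2303.09265 — 2 statements merged into one kernel-verified Lean document; each statement's English description precedes it below -/
import Mathlib

section
/- Let q be a power of an odd prime, A, B ∈ F_{q³}*, and r ∈ F_q. Then there exists x ∈ F_{q³}* with Tr(A·x^{q−1} + B·x^{1−q}) + r = 0 if and only if there exists u ∈ F_{q³} with Tr(u) = r and N(u) + N(A) + N(B) − Tr(A·B·u^{q²}) = 0. -/
open Polynomial


-- Hilbert 90 style lemma
lemma aux_h90 (q : ℕ) (hq2 : 2 ≤ q)
    (F : Type*) [Field F] [Fintype F] (hF : Fintype.card F = q ^ 3)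
    (y : F) (hy : y ≠ 0) (hN : y ^ (1 + q + q ^ 2) = 1) :
    ∃ x : F, x ≠ 0 ∧ x ^ (q - 1) = y := by
  classical
  have harith : (q - 1) * (1 + q + q ^ 2) = q ^ 3 - 1 := by
    obtain ⟨k, rfl⟩ : ∃ k, q = k + 1 := ⟨q - 1, by omega⟩
    simp only [Nat.add_sub_cancel]
    symm
    apply Nat.sub_eq_of_eq_add
    ring
  obtain ⟨g, hg⟩ := IsCyclic.exists_generator (α := Fˣ)
  have hog : orderOf g = q ^ 3 - 1 := by
    rw [orderOf_eq_card_of_forall_mem_zpowers hg, Nat.card_eq_fintype_card,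
      Fintype.card_units, hF]
  set yu := Units.mk0 y hy with hyu
  obtain ⟨k, hk⟩ := Submonoid.mem_powers_iff yu g |>.mp
    (mem_powers_iff_mem_zpowers.mpr (hg yu))
  have hyuN : yu ^ (1 + q + q ^ 2) = 1 := by
    ext
    simpa [hyu] using hN
  have hgk : g ^ (k * (1 + q + q ^ 2)) = 1 := by
    rw [pow_mul, hk, hyuN]
  have hdvd : (q - 1) * (1 + q + q ^ 2) ∣ k * (1 + q + q ^ 2) := by
    rw [harith, ← hog]
    exact orderOf_dvd_of_pow_eq_one hgk
  have hdvd2 : (q - 1) ∣ k :=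
    (Nat.mul_dvd_mul_iff_right (show 0 < 1 + q + q ^ 2 by positivity)).mp hdvd
  obtain ⟨t, rfl⟩ := hdvd2
  refine ⟨(g ^ t : Fˣ), Units.ne_zero _, ?_⟩
  have : ((g ^ t) ^ (q - 1) : Fˣ) = yu := by
    rw [← pow_mul, mul_comm t (q-1)] at *
    exact hk
  rw [← Units.val_pow_eq_pow_val, this, hyu, Units.val_mk0]

open Polynomial

lemma aux_root (p m q : ℕ) (hp : p.Prime) (hm : 0 < m) (hq : q = p ^ m)
    (F : Type*) [Field F] [Fintype F] [CharP F p] (hF : Fintype.card F = q ^ 3)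
    (u : F) (hu : u ≠ 0) :
    ∃ s : F, s ^ q * s + u * s + ((u ^ q) ^ q * u) = 0 := by
  classical
  haveI : Fact p.Prime := ⟨hp⟩
  have hq2 : 2 ≤ q := by
    rw [hq]
    calc 2 ≤ p := hp.two_le
    _ ≤ p ^ m := Nat.le_self_pow (by omega) p
  -- cube of Frobenius is identity on F
  have h3 : ∀ z : F, ((z ^ q) ^ q) ^ q = z := by
    intro z
    rw [← pow_mul, ← pow_mul, show q * (q * q) = q ^ 3 by ring, ← hF]
    exact FiniteField.pow_card z
  set b : F := (u ^ q) ^ q * u with hb_def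
  have hb : b ≠ 0 := mul_ne_zero (pow_ne_zero _ (pow_ne_zero _ hu)) hu
  -- the polynomial
  set f : F[X] := X ^ (q + 1) + (C u * X + C b) with hf_def
  have hdeglin : (C u * X + C b).degree ≤ 1 := degree_linear_le
  have hdegf : f.degree = (q + 1 : ℕ) := by
    rw [hf_def, degree_add_eq_left_of_degree_lt, degree_X_pow]
    rw [degree_X_pow]
    calc (C u * X + C b).degree ≤ 1 := hdeglin
    _ < ((q + 1 : ℕ) : WithBot ℕ) := by
        exact_mod_cast (show (1:ℕ) < q + 1 by omega)
  have hdegf0 : f.degree ≠ 0 := by rw [hdegf]; exact_mod_cast (by omega : (q+1 : ℕ) ≠ 0)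
  set K := f.SplittingField
  set i : F →+* K := algebraMap F K with hi_def
  haveI : CharP K p := charP_of_injective_ringHom i.injective p
  obtain ⟨θ, hθ⟩ := Splits.exists_eval_eq_zero (SplittingField.splits f) (by rwa [degree_map])
  rw [eval_map] at hθ
  have hR0 : θ ^ q * θ + i u * θ + i b = 0 := by
    have := hθ
    simp only [hf_def, eval₂_add, eval₂_mul, eval₂_pow, eval₂_X, eval₂_C] at this
    rw [← this, pow_succ]
    ring
  have hθ0 : θ ≠ 0 := by
    rintro rfl
    simp only [mul_zero, zero_mul, add_zero, zero_add, ne_eq] at hR0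
    exact hb (i.injective (by simpa using hR0))
  -- Frobenius on K
  have kfrob : ∀ x y : K, (x + y) ^ q = x ^ q + y ^ q := by
    intro x y
    rw [hq]
    exact add_pow_char_pow x y p m
  have hmap : ∀ z : F, (i z) ^ q = i (z ^ q) := fun z => (map_pow i z q).symm
  -- apply Frobenius to hR0 twice
  have hR1 : (θ ^ q) ^ q * θ ^ q + i (u ^ q) * θ ^ q + i (b ^ q) = 0 := by
    have := congrArg (· ^ q) hR0
    simp only [kfrob, mul_pow, hmap, zero_pow (by omega : q ≠ 0)] at this
    exact this
  have hR2 : ((θ ^ q) ^ q) ^ q * (θ ^ q) ^ q + i ((u ^ q) ^ q) * (θ ^ q) ^ q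
      + i ((b ^ q) ^ q) = 0 := by
    have := congrArg (· ^ q) hR1
    simp only [kfrob, mul_pow, hmap, zero_pow (by omega : q ≠ 0)] at this
    exact this
  -- rewrite the b's
  have hbq : b ^ q = u * u ^ q := by rw [hb_def, mul_pow, h3, mul_comm]
  have hbqq : (b ^ q) ^ q = u ^ q * (u ^ q) ^ q := by rw [hbq, mul_pow]
  set X0 := θ; set X1 := θ ^ q; set X2 := (θ ^ q) ^ q; set X3 := ((θ ^ q) ^ q) ^ q
  have hU2eq : i ((u ^ q) ^ q) = (i u ^ q) ^ q := by rw [map_pow, map_pow]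
  set U0 := i u; set U1 := i (u ^ q); set U2 := i ((u ^ q) ^ q)
  have hU0 : U0 ≠ 0 := fun h => hu (i.injective (h.trans (map_zero i).symm))
  have hR0' : X1 * X0 + U0 * X0 + U2 * U0 = 0 := by
    rw [← hR0, hb_def]; simp only [map_mul]; try ring
  have hR1' : X2 * X1 + U1 * X1 + U0 * U1 = 0 := by
    rw [← hR1, hbq]; simp only [map_mul]; try ring
  have hR2' : X3 * X2 + U2 * X2 + U1 * U2 = 0 := by
    rw [← hR2, hbqq]; simp only [map_mul]; try ring
  have hX1 : X1 ≠ 0 := pow_ne_zero _ hθ0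
  have hX2 : X2 ≠ 0 := pow_ne_zero _ hX1
  have key : X3 * (X2 * X1 * X0) = X0 * (X2 * X1 * X0) := by
    linear_combination (X1 * X0) * hR2' - (U2 * X0 + X0 ^ 2) * hR1' + (U1 * X0) * hR0'
  have hX3 : X3 = X0 := mul_right_cancel₀ (by
    exact mul_ne_zero (mul_ne_zero hX2 hX1) hθ0) key
  -- θ is fixed by q³ power, hence in the image of F
  have hfix : θ ^ q ^ 3 = θ := by
    rw [show q ^ 3 = q * q * q by ring, pow_mul, pow_mul]
    exact hX3
  -- count roots of X^{q³} - X
  set g : K[X] := X ^ q ^ 3 - X with hg_def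
  have hq3big : 1 < q ^ 3 := Nat.one_lt_pow (by omega) (by omega)
  have hgne : g ≠ 0 := by
    intro h
    have h2 := congrArg (fun P => coeff P 1) h
    simp only [hg_def, coeff_sub, coeff_X_pow, coeff_X, if_pos rfl, coeff_zero] at h2
    rw [if_neg (show ¬(1 = q ^ 3) by omega)] at h2
    norm_num at h2
  have hgdeg : g.natDegree ≤ q ^ 3 := by
    calc g.natDegree ≤ max (X ^ q ^ 3 : K[X]).natDegree (X : K[X]).natDegree :=
          natDegree_sub_le _ _
    _ ≤ q ^ 3 := by
        simp only [natDegree_X_pow, natDegree_X]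
        omega
  have hroots : g.roots.toFinset.card ≤ q ^ 3 := by
    calc g.roots.toFinset.card ≤ Multiset.card g.roots := Multiset.toFinset_card_le _
    _ ≤ g.natDegree := card_roots' g
    _ ≤ q ^ 3 := hgdeg
  set T : Finset K := Finset.univ.image (fun a : F => i a) with hT_def
  have hTsub : T ⊆ g.roots.toFinset := by
    intro z hz
    simp only [hT_def, Finset.mem_image] at hz
    obtain ⟨a, _, rfl⟩ := hz
    rw [Multiset.mem_toFinset, mem_roots hgne]
    simp only [hg_def, IsRoot, eval_sub, eval_pow, eval_X]
    rw [← map_pow]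
    have : a ^ q ^ 3 = a := by rw [← hF]; exact FiniteField.pow_card a
    rw [this, sub_self]
  have hTcard : T.card = q ^ 3 := by
    rw [hT_def, Finset.card_image_of_injective _ i.injective, Finset.card_univ, hF]
  have hTeq : T = g.roots.toFinset :=
    Finset.eq_of_subset_of_card_le hTsub (by rw [hTcard]; exact hroots)
  have hθT : θ ∈ T := by
    rw [hTeq, Multiset.mem_toFinset, mem_roots hgne]
    simp only [hg_def, IsRoot, eval_sub, eval_pow, eval_X, hfix, sub_self]
  rw [hT_def, Finset.mem_image] at hθT
  obtain ⟨s, _, hs⟩ := hθT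
  refine ⟨s, i.injective ?_⟩
  rw [map_add, map_add, map_mul, map_mul, map_mul, map_pow, map_pow, map_pow, hs, map_zero,
    ← hU2eq]
  exact hR0'

lemma aux_star (q : ℕ) (F : Type*) [Field F] (A B y u : F)
    (hy : y ≠ 0)
    (h3 : ∀ z : F, ((z ^ q) ^ q) ^ q = z)
    (hadd : ∀ x z : F, (x + z) ^ q = x ^ q + z ^ q)
    (hneg : ∀ x : F, (-x) ^ q = -(x ^ q))
    (hu : u = -(A * y + ((B / y) ^ q) ^ q)) :
    (y * y ^ q * (y ^ q) ^ q) *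
      (u * u ^ q * (u ^ q) ^ q + A * A ^ q * (A ^ q) ^ q + B * B ^ q * (B ^ q) ^ q
        - (A * B * (u ^ q) ^ q + A ^ q * B ^ q * u + (A ^ q) ^ q * (B ^ q) ^ q * u ^ q))
    = (y * y ^ q * (y ^ q) ^ q - 1) *
        (B * B ^ q * (B ^ q) ^ q - A * A ^ q * (A ^ q) ^ q * (y * y ^ q * (y ^ q) ^ q)) := by
  have hyq : y ^ q ≠ 0 := pow_ne_zero _ hy
  have hyqq : (y ^ q) ^ q ≠ 0 := pow_ne_zero _ hyq
  have hu1 : u ^ q = -(A ^ q * y ^ q + B / y) := by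
    rw [hu, hneg, hadd, mul_pow, h3]
  have hu2 : (u ^ q) ^ q = -((A ^ q) ^ q * (y ^ q) ^ q + (B / y) ^ q) := by
    rw [hu1, hneg, hadd, mul_pow]
  rw [hu2, hu1, hu]
  simp only [div_pow]
  field_simp
  ring


/-- for `A, B ∈ F_{q³}*` and `r ∈ F_q`, there exists a nonzero root of
`Tr(A·x^{q−1} + B·x^{1−q}) + r` iff there exists `u ∈ F_{q³}` with `Tr(u) = r` and
`N(u) + N(A) + N(B) − Tr(A·B·u^{q²}) = 0`. -/
theorem root_exists_iff_trace_norm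
    (p m : ℕ) (hp : p.Prime) (hodd : Odd p) (hm : 0 < m)
    (q : ℕ) (hq : q = p ^ m)
    (F : Type*) [Field F] [Fintype F] (hF : Fintype.card F = q ^ 3)
    (A B : F) (hA : A ≠ 0) (hB : B ≠ 0)
    (r : F) (hr : r ^ q = r)
    (Tr : F → F) (hTr : ∀ x, Tr x = x + x ^ q + x ^ q ^ 2) :
    (∃ x : F, x ≠ 0 ∧ Tr (A * x ^ (q - 1) + B * (x ^ (q - 1))⁻¹) + r = 0) ↔
      (∃ u : F, Tr u = r ∧
        u ^ (1 + q + q ^ 2) + A ^ (1 + q + q ^ 2) + B ^ (1 + q + q ^ 2)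
          - Tr (A * B * u ^ q ^ 2) = 0) := by
  classical
  have hq2 : 2 ≤ q := by
    rw [hq]
    calc 2 ≤ p := hp.two_le
    _ ≤ p ^ m := Nat.le_self_pow (by omega) p
  have hqodd : Odd q := by rw [hq]; exact hodd.pow
  haveI hFact : Fact p.Prime := ⟨hp⟩
  -- characteristic p
  obtain ⟨n, hpr, hcard⟩ := FiniteField.card F (ringChar F)
  have hrc : ringChar F = p := by
    have h1 : ringChar F ^ (n : ℕ) = p ^ (m * 3) := by
      rw [← hcard, hF, hq, ← pow_mul]
    have h2 : ringChar F ∣ p ^ (m * 3) := by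
      rw [← h1]
      exact dvd_pow_self _ (by exact_mod_cast n.pos.ne')
    exact (Nat.prime_dvd_prime_iff_eq hpr hp).mp (hpr.dvd_of_dvd_pow h2)
  haveI hcharp : CharP F p := hrc ▸ ringChar.charP F
  -- Frobenius facts
  have hadd : ∀ x z : F, (x + z) ^ q = x ^ q + z ^ q := by
    intro x z; rw [hq]; exact add_pow_char_pow x z p m
  have hneg : ∀ x : F, (-x) ^ q = -(x ^ q) := fun x => Odd.neg_pow hqodd x
  have hsub : ∀ x z : F, (x - z) ^ q = x ^ q - z ^ q := by
    intro x z; rw [sub_eq_add_neg, hadd, hneg, sub_eq_add_neg]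
  have hcardpow : ∀ z : F, z ^ q ^ 3 = z := fun z => by
    rw [← hF]; exact FiniteField.pow_card z
  have h3 : ∀ z : F, ((z ^ q) ^ q) ^ q = z := by
    intro z
    rw [← pow_mul, ← pow_mul, show q * (q * q) = q ^ 3 by ring]
    exact hcardpow z
  have hqq : ∀ z : F, z ^ q ^ 2 = (z ^ q) ^ q := fun z => by rw [pow_two, pow_mul]
  have hTr' : ∀ z : F, Tr z = z + z ^ q + (z ^ q) ^ q := fun z => by rw [hTr, hqq]
  have trace_add : ∀ x z : F, Tr (x + z) = Tr x + Tr z := by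
    intro x z; simp only [hTr', hadd]; ring
  have trace_neg : ∀ z : F, Tr (-z) = -Tr z := by
    intro z; simp only [hTr', hneg]; ring
  have trace_frob : ∀ z : F, Tr (z ^ q) = Tr z := by
    intro z; rw [hTr', hTr' z, h3]; ring
  have hNpow : ∀ z : F, z ^ (1 + q + q ^ 2) = z * z ^ q * (z ^ q) ^ q := by
    intro z; rw [pow_add, pow_add, pow_one, hqq]
  have harith : (q - 1) * (1 + q + q ^ 2) = q ^ 3 - 1 := by
    obtain ⟨k, rfl⟩ : ∃ k, q = k + 1 := ⟨q - 1, by omega⟩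
    simp only [Nat.add_sub_cancel]
    symm
    apply Nat.sub_eq_of_eq_add
    ring
  have hTrABu : ∀ u : F, Tr (A * B * u ^ q ^ 2)
      = A * B * (u ^ q) ^ q + A ^ q * B ^ q * u + (A ^ q) ^ q * (B ^ q) ^ q * u ^ q := by
    intro u
    have e1 : (A * B * (u ^ q) ^ q) ^ q = A ^ q * B ^ q * u := by
      rw [mul_pow, mul_pow, h3]
    have e2 : (A ^ q * B ^ q * u) ^ q = (A ^ q) ^ q * (B ^ q) ^ q * u ^ q := by
      rw [mul_pow, mul_pow]
    rw [hqq, hTr', e1, e2]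
  constructor
  · -- forward direction
    rintro ⟨x, hx, hroot⟩
    obtain ⟨y, hydef⟩ : ∃ y : F, y = x ^ (q - 1) := ⟨_, rfl⟩
    rw [← hydef] at hroot
    have hy : y ≠ 0 := hydef ▸ pow_ne_zero _ hx
    have hNy : y * y ^ q * (y ^ q) ^ q = 1 := by
      rw [← hNpow]
      have h1 : y ^ (1 + q + q ^ 2) = x ^ (q ^ 3 - 1) := by
        rw [hydef, ← pow_mul, harith]
      rw [h1]
      have h2 : x ^ (q ^ 3 - 1) * x = 1 * x := by
        rw [← pow_succ, one_mul, Nat.sub_add_cancel (Nat.one_le_pow _ _ (by omega))]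
        exact hcardpow x
      exact mul_right_cancel₀ hx h2
    obtain ⟨u, hudef⟩ : ∃ u : F, u = -(A * y + ((B / y) ^ q) ^ q) := ⟨_, rfl⟩
    have hTru : Tr u = r := by
      have h1 : Tr (A * y + B * y⁻¹) = -r := eq_neg_of_add_eq_zero_left hroot
      rw [hudef, trace_neg, trace_add, trace_frob, trace_frob, ← trace_add,
        div_eq_mul_inv, h1, neg_neg]
    refine ⟨u, hTru, ?_⟩
    have hstar := aux_star q F A B y u hy h3 hadd hneg hudef
    rw [hNy] at hstar
    rw [hNpow, hNpow, hNpow, hTrABu]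
    linear_combination hstar
  · -- backward direction
    rintro ⟨u, hTru, hCu⟩
    rw [hNpow, hNpow, hNpow, hTrABu] at hCu
    have hABne : A * B ≠ 0 := mul_ne_zero hA hB
    have hbne : ((A * B) ^ q) ^ q ≠ 0 := pow_ne_zero _ (pow_ne_zero _ hABne)
    have hs_ex : ∃ s : F, s ^ q * s + u * s + ((A * B) ^ q) ^ q = 0 := by
      by_cases hα : A * B = u * u ^ q
      · have hu0 : u ≠ 0 := by
          rintro rfl
          rw [zero_mul] at hα
          exact hABne hα
        obtain ⟨s, hs⟩ := aux_root p m q hp hm hq F hF u hu0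
        refine ⟨s, ?_⟩
        rw [hα, mul_pow, mul_pow, h3]
        exact hs
      · obtain ⟨v1, hv1def⟩ : ∃ v1 : F,
            v1 = u ^ q * ((A ^ q) ^ q * (B ^ q) ^ q) - A * A ^ q * (A ^ q) ^ q := ⟨_, rfl⟩
        obtain ⟨v2, hv2def⟩ : ∃ v2 : F, v2 = A * B - u * u ^ q := ⟨_, rfl⟩
        have hv2 : v2 ≠ 0 := by rw [hv2def]; exact sub_ne_zero.mpr hα
        have hv1q : v1 ^ q = (u ^ q) ^ q * (A * B) - A * A ^ q * (A ^ q) ^ q := by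
          rw [hv1def]
          simp only [hsub, mul_pow, h3]
          ring
        have hv2q : v2 ^ q = A ^ q * B ^ q - u ^ q * (u ^ q) ^ q := by
          rw [hv2def]
          simp only [hsub, mul_pow]
        have hE2 : v1 ^ q * v1 + u * (v1 * v2 ^ q)
            + (A ^ q) ^ q * (B ^ q) ^ q * (v2 * v2 ^ q) = 0 := by
          rw [hv1q, hv2q, hv1def, hv2def]
          linear_combination (A * A ^ q * (A ^ q) ^ q) * hCu
        refine ⟨v1 / v2, ?_⟩
        have hc2 : ((A * B) ^ q) ^ q = (A ^ q) ^ q * (B ^ q) ^ q := by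
          rw [mul_pow, mul_pow]
        have hv2qne : v2 ^ q ≠ 0 := pow_ne_zero _ hv2
        have hquot : (v1 / v2) ^ q * (v1 / v2) + u * (v1 / v2)
            + (A ^ q) ^ q * (B ^ q) ^ q
            = (v1 ^ q * v1 + u * (v1 * v2 ^ q)
                + (A ^ q) ^ q * (B ^ q) ^ q * (v2 * v2 ^ q)) / (v2 ^ q * v2) := by
          rw [div_pow]
          field_simp
        rw [hc2, hquot, hE2, zero_div]
    obtain ⟨s, hs⟩ := hs_ex
    have hsne : s ≠ 0 := by
      rintro rfl
      rw [zero_pow (by omega : q ≠ 0), mul_zero, mul_zero, zero_add, zero_add] at hs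
      exact hbne hs
    obtain ⟨y, hydef⟩ : ∃ y : F, y = s ^ q / A := ⟨_, rfl⟩
    have hy : y ≠ 0 := hydef ▸ div_ne_zero (pow_ne_zero _ hsne) hA
    have hAy : A * y = s ^ q := by
      rw [hydef]; field_simp
    have hByqq : ((B / y) ^ q) ^ q = ((A * B) ^ q) ^ q / s := by
      have hBy : B / y = A * B / s ^ q := by
        rw [hydef]
        rw [div_div_eq_mul_div]
        ring_nf
      rw [hBy, div_pow, div_pow, h3]
    have hudef : u = -(A * y + ((B / y) ^ q) ^ q) := by
      rw [hAy, hByqq]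
      have h6 : u * s = -(s ^ q + ((A * B) ^ q) ^ q / s) * s := by
        rw [neg_mul, add_mul, div_mul_cancel₀ _ hsne]
        linear_combination hs
      exact mul_right_cancel₀ hsne h6
    have htr : Tr (A * y + B * y⁻¹) = -r := by
      have e3 : Tr (B * y⁻¹) = Tr (((B / y) ^ q) ^ q) := by
        rw [trace_frob, trace_frob, div_eq_mul_inv]
      rw [trace_add, e3, ← trace_add]
      have e4 : A * y + ((B / y) ^ q) ^ q = -u := by rw [hudef]; ring
      rw [e4, trace_neg, hTru]
    have hstar := aux_star q F A B y u hy h3 hadd hneg hudef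
    have hzero : (y * y ^ q * (y ^ q) ^ q - 1) *
        (B * B ^ q * (B ^ q) ^ q - A * A ^ q * (A ^ q) ^ q * (y * y ^ q * (y ^ q) ^ q))
        = 0 := by
      rw [← hstar]
      rw [show u * u ^ q * (u ^ q) ^ q + A * A ^ q * (A ^ q) ^ q + B * B ^ q * (B ^ q) ^ q
          - (A * B * (u ^ q) ^ q + A ^ q * B ^ q * u + (A ^ q) ^ q * (B ^ q) ^ q * u ^ q)
          = 0 from hCu, mul_zero]
    rcases mul_eq_zero.mp hzero with h1 | h2
    · have hNy : y ^ (1 + q + q ^ 2) = 1 := by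
        rw [hNpow]; exact sub_eq_zero.mp h1
      obtain ⟨x, hx0, hxy⟩ := aux_h90 q hq2 F hF y hy hNy
      refine ⟨x, hx0, ?_⟩
      rw [hxy, htr]
      ring
    · have hNB : B * B ^ q * (B ^ q) ^ q
          = A * A ^ q * (A ^ q) ^ q * (y * y ^ q * (y ^ q) ^ q) := sub_eq_zero.mp h2
      obtain ⟨y', hy'def⟩ : ∃ y' : F, y' = B / (A * y) := ⟨_, rfl⟩
      have hy'0 : y' ≠ 0 := hy'def ▸ div_ne_zero hB (mul_ne_zero hA hy)
      have hNy' : y' ^ (1 + q + q ^ 2) = 1 := by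
        rw [hNpow, hy'def]
        rw [div_pow, div_pow, mul_pow, mul_pow, div_mul_div_comm, div_mul_div_comm]
        rw [div_eq_one_iff_eq (by
          exact mul_ne_zero (mul_ne_zero (mul_ne_zero hA hy)
            (mul_ne_zero (pow_ne_zero _ hA) (pow_ne_zero _ hy)))
            (mul_ne_zero (pow_ne_zero _ (pow_ne_zero _ hA))
              (pow_ne_zero _ (pow_ne_zero _ hy))))]
        linear_combination hNB
      have htr' : Tr (A * y' + B * y'⁻¹) = -r := by
        have e1 : A * y' = B / y := by
          rw [hy'def]; field_simp
        have e2 : B * y'⁻¹ = A * y := by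
          rw [hy'def]
          field_simp
        rw [e1, e2, div_eq_mul_inv, add_comm]
        exact htr
      obtain ⟨x, hx0, hxy⟩ := aux_h90 q hq2 F hF y' hy'0 hNy'
      refine ⟨x, hx0, ?_⟩
      rw [hxy, htr']
      ring
end

section
/- Let q be a power of an odd prime and A, B, u ∈ F_{q³}. The map x ↦ B^{q²}·x^{q²} + A·x^q + u·x is a bijection of F_{q³} if and only if N(u) + N(A) + N(B) − Tr(A·B·u^{q²}) ≠ 0. -/
open Polynomial

lemma polyzero {F : Type*} [Field F] [Fintype F] {q : ℕ} (hq1 : 1 < q)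
    (hcard : q ^ 2 < Fintype.card F) (a b c : F)
    (h : ∀ x : F, a * x + b * x ^ q + c * x ^ q ^ 2 = 0) : a = 0 ∧ b = 0 ∧ c = 0 := by
  have h1q : (1 : ℕ) ≠ q := hq1.ne
  have hqle : q ≤ q ^ 2 := by nlinarith
  have hqq2 : q ≠ q ^ 2 := by nlinarith
  have h1q2 : (1 : ℕ) ≠ q ^ 2 := by nlinarith
  have hP : (C a * X ^ 1 + C b * X ^ q + C c * X ^ q ^ 2 : F[X]) = 0 := by
    apply Polynomial.eq_zero_of_natDegree_lt_card_of_eval_eq_zero _ (f := (id : F → F))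
      Function.injective_id
    · intro x; simpa using h x
    · refine lt_of_le_of_lt ?_ hcard
      refine (natDegree_add_le _ _).trans (max_le ((natDegree_add_le _ _).trans (max_le ?_ ?_)) ?_)
      · exact (natDegree_C_mul_le _ _).trans (by simp; nlinarith)
      · exact (natDegree_C_mul_le _ _).trans (by simp; try nlinarith)
      · exact (natDegree_C_mul_le _ _).trans (by simp; try nlinarith)
  refine ⟨?_, ?_, ?_⟩
  · have := congrArg (fun P : F[X] => P.coeff 1) hP
    simpa [coeff_X_pow, coeff_X, h1q, h1q2, h1q.symm, h1q2.symm] using this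
  · have := congrArg (fun P : F[X] => P.coeff q) hP
    simpa [coeff_X_pow, coeff_X, h1q, h1q.symm, hqq2, hqq2.symm] using this
  · have := congrArg (fun P : F[X] => P.coeff (q ^ 2)) hP
    simpa [coeff_X_pow, coeff_X, h1q2, h1q2.symm, hqq2, hqq2.symm] using this

/-- the map `x ↦ B^{q²}·x^{q²} + A·x^q + u·x` is a bijection of `F_{q³}`
iff `N(u) + N(A) + N(B) − Tr(A·B·u^{q²}) ≠ 0`. -/
theorem linearized_bijective_iff_det_ne_zero
    (p m : ℕ) (hp : p.Prime) (hodd : Odd p) (hm : 0 < m)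
    (q : ℕ) (hq : q = p ^ m)
    (F : Type*) [Field F] [Fintype F] (hF : Fintype.card F = q ^ 3)
    (A B u : F)
    (Tr : F → F) (hTr : ∀ x, Tr x = x + x ^ q + x ^ q ^ 2) :
    Function.Bijective (fun x : F => B ^ q ^ 2 * x ^ q ^ 2 + A * x ^ q + u * x) ↔
      u ^ (1 + q + q ^ 2) + A ^ (1 + q + q ^ 2) + B ^ (1 + q + q ^ 2)
        - Tr (A * B * u ^ q ^ 2) ≠ 0 := by
  classical
  have hq1 : 1 < q := by rw [hq]; exact Nat.one_lt_pow hm.ne' hp.one_lt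
  -- characteristic
  haveI : CharP F (ringChar F) := ringChar.charP F
  obtain ⟨n, hn_prime, hcard⟩ := FiniteField.card F (ringChar F)
  have hrc : ringChar F = p := by
    have h1 : ringChar F ∣ p ^ (m * 3) := by
      have hpc : p ^ (m * 3) = Fintype.card F := by rw [hF, hq, ← pow_mul]
      rw [hpc, hcard]
      exact dvd_pow_self _ n.ne_zero
    have := hn_prime.dvd_of_dvd_pow h1
    exact ((Nat.prime_dvd_prime_iff_eq hn_prime hp).mp this)
  haveI hcharp : CharP F p := hrc ▸ ringChar.charP F
  haveI : Fact p.Prime := ⟨hp⟩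
  -- Frobenius facts
  have haddq : ∀ x y : F, (x + y) ^ q = x ^ q + y ^ q := by
    intro x y; rw [hq]; exact add_pow_char_pow x y p m
  have haddq2 : ∀ x y : F, (x + y) ^ q ^ 2 = x ^ q ^ 2 + y ^ q ^ 2 := by
    intro x y; rw [hq, ← pow_mul]; exact add_pow_char_pow x y p (m*2)
  have hsubq : ∀ x y : F, (x - y) ^ q = x ^ q - y ^ q := by
    intro x y; rw [hq]; exact sub_pow_char_pow x y m
  have hsubq2 : ∀ x y : F, (x - y) ^ q ^ 2 = x ^ q ^ 2 - y ^ q ^ 2 := by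
    intro x y; rw [hq, ← pow_mul]; exact sub_pow_char_pow x y (m*2)
  have hcube : ∀ x : F, x ^ q ^ 3 = x := by
    intro x; rw [← hF]; exact FiniteField.pow_card x
  have hqq : ∀ x : F, (x ^ q) ^ q = x ^ q ^ 2 := by
    intro x; rw [← pow_mul, pow_two]
  have hq2q : ∀ x : F, (x ^ q ^ 2) ^ q = x := by
    intro x; rw [← pow_mul, ← pow_succ]; exact hcube x
  have hqq2 : ∀ x : F, (x ^ q) ^ q ^ 2 = x := by
    intro x; rw [← pow_mul, ← pow_succ']; exact hcube x
  have hq2q2 : ∀ x : F, (x ^ q ^ 2) ^ q ^ 2 = x ^ q := by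
    intro x
    rw [← pow_mul]
    have : q ^ 2 * q ^ 2 = q ^ 3 * q := by ring
    rw [this, pow_mul, hcube x]
  -- the matrix
  set M : Matrix (Fin 3) (Fin 3) F :=
    !![u, A, B ^ q ^ 2; B, u ^ q, A ^ q; A ^ q ^ 2, B ^ q, u ^ q ^ 2] with hM
  have hdet : M.det = u ^ (1 + q + q ^ 2) + A ^ (1 + q + q ^ 2) + B ^ (1 + q + q ^ 2)
      - Tr (A * B * u ^ q ^ 2) := by
    have e1 : (A * B * u ^ q ^ 2) ^ q = A ^ q * B ^ q * u := by
      rw [mul_pow, mul_pow, hq2q]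
    have e2 : (A * B * u ^ q ^ 2) ^ q ^ 2 = A ^ q ^ 2 * B ^ q ^ 2 * u ^ q := by
      rw [mul_pow, mul_pow, hq2q2]
    rw [hM, hTr, e1, e2, Matrix.det_fin_three]
    simp only [Matrix.cons_val', Matrix.cons_val_zero, Matrix.cons_val_one, Matrix.head_cons,
      Matrix.empty_val', Matrix.cons_val_fin_one, Matrix.head_fin_const, Matrix.cons_val_two,
      Matrix.tail_cons, Matrix.of_apply]
    rw [pow_add, pow_add, pow_add, pow_add, pow_add, pow_add, pow_one, pow_one, pow_one]
    ring
  set L : F → F := fun x : F => B ^ q ^ 2 * x ^ q ^ 2 + A * x ^ q + u * x with hL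
  constructor
  · -- bijective → det ≠ 0
    intro hbij hzero
    have hdet0 : M.det = 0 := by rw [hdet]; exact hzero
    obtain ⟨v, hv0, hMv⟩ := Matrix.exists_mulVec_eq_zero_iff.mpr hdet0
    set a := v 0 with ha; set b := v 1 with hb; set c := v 2 with hc
    have e1 : u * a + A * b + B ^ q ^ 2 * c = 0 := by
      have := congrFun hMv 0
      simpa [hM, Matrix.mulVec, dotProduct, Fin.sum_univ_three, ← ha, ← hb, ← hc] using this
    have e2 : B * a + u ^ q * b + A ^ q * c = 0 := by
      have := congrFun hMv 1
      simpa [hM, Matrix.mulVec, dotProduct, Fin.sum_univ_three, ← ha, ← hb, ← hc] using this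
    have e3 : A ^ q ^ 2 * a + B ^ q * b + u ^ q ^ 2 * c = 0 := by
      have := congrFun hMv 2
      simpa [hM, Matrix.mulVec, dotProduct, Fin.sum_univ_three, ← ha, ← hb, ← hc] using this
    -- raise e3 to the q, e2 to the q^2
    have f1 : A * a ^ q + B ^ q ^ 2 * b ^ q + u * c ^ q = 0 := by
      have := congrArg (· ^ q) e3
      simp only [haddq, mul_pow, hqq, hq2q, zero_pow (by positivity : q ≠ 0)] at this
      exact this
    have f2 : B ^ q ^ 2 * a ^ q ^ 2 + u * b ^ q ^ 2 + A * c ^ q ^ 2 = 0 := by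
      have := congrArg (· ^ q ^ 2) e2
      simp only [haddq2, mul_pow, hqq2, hq2q2, zero_pow (by positivity : q ^ 2 ≠ 0)] at this
      exact this
    -- find lambda making the fixed vector nonzero
    have hcardF : q ^ 2 < Fintype.card F := by
      rw [hF]
      have : 0 < q := by positivity
      nlinarith
    have hlam : ∃ lam : F, a * lam + c ^ q * lam ^ q + b ^ q ^ 2 * lam ^ q ^ 2 ≠ 0 := by
      by_contra hcon
      push_neg at hcon
      obtain ⟨h1, h2, h3⟩ := polyzero hq1 hcardF a (c ^ q) (b ^ q ^ 2) hcon
      apply hv0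
      funext i
      fin_cases i
      · simpa [← ha] using h1
      · have : b = 0 := by
          have := congrArg (· ^ q) h3
          simpa [hq2q, zero_pow (by positivity : q ≠ 0)] using this
        simpa [← hb] using this
      · have : c = 0 := by
          have := congrArg (· ^ q ^ 2) h2
          simpa [hqq2, zero_pow (by positivity : q ^ 2 ≠ 0)] using this
        simpa [← hc] using this
    obtain ⟨lam, hlam⟩ := hlam
    set x0 : F := a * lam + c ^ q * lam ^ q + b ^ q ^ 2 * lam ^ q ^ 2 with hx0
    have hx0q : x0 ^ q = b * lam + a ^ q * lam ^ q + c ^ q ^ 2 * lam ^ q ^ 2 := by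
      rw [hx0]
      simp only [haddq, mul_pow, hqq, hq2q]
      ring
    have hx0q2 : x0 ^ q ^ 2 = c * lam + b ^ q * lam ^ q + a ^ q ^ 2 * lam ^ q ^ 2 := by
      rw [hx0]
      simp only [haddq2, mul_pow, hqq2, hq2q2]
      ring
    have hLx0 : L x0 = 0 := by
      rw [hL]
      simp only
      rw [hx0q, hx0q2, hx0]
      linear_combination lam * e1 + lam ^ q * f1 + lam ^ q ^ 2 * f2
    have hL0 : L 0 = 0 := by
      rw [hL]
      simp [zero_pow (show q ≠ 0 by positivity), zero_pow (show q ^ 2 ≠ 0 by positivity)]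
    exact hlam (hbij.injective (hLx0.trans hL0.symm))
  · -- det ≠ 0 → bijective
    intro hne
    rw [← Finite.injective_iff_bijective]
    intro x y hxy
    by_contra hxyne
    have hz : x - y ≠ 0 := sub_ne_zero.mpr hxyne
    set z := x - y with hzdef
    have hLz : L z = 0 := by
      rw [hL]
      simp only [hzdef, hsubq, hsubq2, mul_sub]
      rw [hL] at hxy
      simp only at hxy
      linear_combination hxy
    set v : Fin 3 → F := ![z, z ^ q, z ^ q ^ 2] with hv
    have hv0 : v ≠ 0 := by
      intro h
      exact hz (by simpa [hv] using congrFun h 0)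
    have hMv : M.mulVec v = 0 := by
      rw [hL] at hLz
      simp only at hLz
      funext i
      fin_cases i
      · simp [hM, hv, Matrix.mulVec, dotProduct, Fin.sum_univ_three]
        linear_combination hLz
      · simp [hM, hv, Matrix.mulVec, dotProduct, Fin.sum_univ_three]
        have := congrArg (· ^ q) hLz
        simp only [haddq, mul_pow, hqq, hq2q, zero_pow (by positivity : q ≠ 0)] at this
        linear_combination this
      · simp [hM, hv, Matrix.mulVec, dotProduct, Fin.sum_univ_three]
        have := congrArg (· ^ q ^ 2) hLz
        simp only [haddq2, mul_pow, hqq2, hq2q2, zero_pow (by positivity : q ^ 2 ≠ 0)] at this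
        linear_combination this
    have : M.det = 0 := Matrix.exists_mulVec_eq_zero_iff.mp ⟨v, hv0, hMv⟩
    rw [hdet] at this
    exact hne this
end
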